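/- Let k ≥ 2, q ≥ 1, let π ∈ 𝕊_{k−1}, and let 1 ≤ a < b ≤ k. Suppose the set T_{a,b} = {π_a, π_{a+1}, …, π_{b−1}} decomposes into exactly c maximal blocks of consecutive integers. Then the number of edges in E_{a,b}, i.e. the number of x ∈ W^π_{k,q} such that x + e_{π_a} + e_{π_{a+1}} + ⋯ + e_{π_{b−1}} also lies in W^π_{k,q}, equals C(k+q−c−2−|S(π)|, k−1). -/

import Mathlib

open Finset

attribute [local instance] Classical.propDecidable

noncomputable section

/-- `π` is a permutation of `{1,…,k-1}` given in one-line notation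
(`π p` is the entry at position `p`), normalized to `0` outside `[1,k-1]`. -/
def OneLine (k : ℕ) (π : ℕ → ℕ) : Prop :=
  Set.BijOn π (Set.Icc 1 (k - 1)) (Set.Icc 1 (k - 1)) ∧
    ∀ p, p ∉ Set.Icc 1 (k - 1) → π p = 0

/-- The set `S(π)` of adjacent inversions of `π`:
those `i ∈ [1,k-2]` such that `i+1` appears before `i` in `π`. -/
def adjInvF (k : ℕ) (π : ℕ → ℕ) : Finset ℕ :=
  (Finset.Icc 1 (k - 2)).filter fun i =>
    ∃ p ∈ Finset.Icc 1 (k - 1), ∃ r ∈ Finset.Icc 1 (k - 1),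
      p < r ∧ π p = i + 1 ∧ π r = i

/-- `W^π_{k,q}`: weakly increasing `(k-1)`-tuples with entries in `[0,q-1]`
that are strictly increasing at every adjacent inversion of `π`
(vectors are functions `ℕ → ℕ` supported on `[1,k-1]`). -/
def W (k q : ℕ) (π : ℕ → ℕ) : Set (ℕ → ℕ) :=
  {v | (∀ i, i ∉ Finset.Icc 1 (k - 1) → v i = 0) ∧
       (∀ i ∈ Finset.Icc 1 (k - 1), v i ≤ q - 1) ∧
       (∀ i, 1 ≤ i → i + 1 ≤ k - 1 → v i ≤ v (i + 1)) ∧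
       (∀ i ∈ adjInvF k π, v i < v (i + 1))}

/-- `x + e_{π_a} + e_{π_{a+1}} + ⋯ + e_{π_{b-1}}`. -/
def shift (π : ℕ → ℕ) (a b : ℕ) (x : ℕ → ℕ) : ℕ → ℕ :=
  fun i => x i + if i ∈ (Finset.Icc a (b - 1)).image π then 1 else 0

/-- Adjacency in the graph `G^π_{k,q}`: one vertex is obtained from the other
by adding `e_{π_a} + ⋯ + e_{π_{b-1}}` for some `1 ≤ a < b ≤ k`. -/
def AdjRel (k : ℕ) (π : ℕ → ℕ) (x y : ℕ → ℕ) : Prop :=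
  ∃ a b, 1 ≤ a ∧ a < b ∧ b ≤ k ∧ (y = shift π a b x ∨ x = shift π a b y)

/-- The number of maximal blocks of consecutive integers of a finite set `T ⊆ ℕ`. -/
def numBlocks (T : Finset ℕ) : ℕ := (T.filter fun t => t + 1 ∉ T).card

/-- `cs_i(π)`: the number of pairs `1 ≤ a < b ≤ k` such that
`T_{a,b} = {π_a,…,π_{b-1}}` decomposes into exactly `i` maximal blocks
of consecutive integers. -/
def cs (k : ℕ) (π : ℕ → ℕ) (i : ℕ) : ℕ :=
  ((Finset.Icc 1 k ×ˢ Finset.Icc 1 k).filter fun p =>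
    p.1 < p.2 ∧ numBlocks ((Finset.Icc p.1 (p.2 - 1)).image π) = i).card

/-- For `i < j`, `{i,j}` is an edge of `G_π` iff `{i,i+1,…,j-1}` occurs as
a set of consecutive entries of `π`. -/
def GpiEdge (k : ℕ) (π : ℕ → ℕ) (i j : ℕ) : Prop :=
  ∃ a, 1 ≤ a ∧ a + (j - i) ≤ k ∧
    (Finset.Icc a (a + (j - i) - 1)).image π = Finset.Icc i (j - 1)

/-- Unordered adjacency in `G_π`. -/
def GpiAdjU (k : ℕ) (π : ℕ → ℕ) (i j : ℕ) : Prop :=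
  (i < j ∧ GpiEdge k π i j) ∨ (j < i ∧ GpiEdge k π j i)

/-- The position of the value `v` in the one-line notation of `π`. -/
def posOf (k : ℕ) (π : ℕ → ℕ) (v : ℕ) : ℕ :=
  if h : ((Finset.Icc 1 (k - 1)).filter fun t => π t = v).Nonempty then
    ((Finset.Icc 1 (k - 1)).filter fun t => π t = v).min' h
  else 0

/-- The rotation `r` on one-line permutations: if `π = π₁…π_{t-1}(k-1)π_{t+1}…π_{k-1}`,
then `r(π) = (π_{t+1}+1)…(π_{k-1}+1) 1 (π₁+1)…(π_{t-1}+1)`. -/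
def rot (k : ℕ) (π : ℕ → ℕ) : ℕ → ℕ := fun p =>
  if p ∉ Finset.Icc 1 (k - 1) then 0
  else if p < k - posOf k π (k - 1) then π (posOf k π (k - 1) + p) + 1
  else if p = k - posOf k π (k - 1) then 1
  else π (p - (k - posOf k π (k - 1))) + 1

/-- The reflection `s` on one-line permutations: if `π = π₁…π_{i-1} 1 π_{i+1}…π_{k-1}`,
then `s(π) = (k+1-π_{i-1})…(k+1-π₁) 1 (k+1-π_{k-1})…(k+1-π_{i+1})`. -/
def srefl (k : ℕ) (π : ℕ → ℕ) : ℕ → ℕ := fun p =>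
  if p ∉ Finset.Icc 1 (k - 1) then 0
  else if p < posOf k π 1 then k + 1 - π (posOf k π 1 - p)
  else if p = posOf k π 1 then 1
  else k + 1 - π (k + posOf k π 1 - p)

/-- The rotation `ρ` of the vertex set `{1,…,k}`. -/
def rotV (k i : ℕ) : ℕ := if i < k then i + 1 else 1

/-- The reflection `σ` of the vertex set `{1,…,k}`. -/
def sreflV (k i : ℕ) : ℕ := if i = 1 then 1 else k + 2 - i

/-- The maximal sorted family `(S₁,…,S_k)` associated with `σ`, `0`-indexed:
`sortedFam k σ (i-1) = S_i`. -/
def sortedFam (k : ℕ) (σ : ℕ → ℕ) : ℕ → Finset ℕ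
  | 0 => insert 1 ((adjInvF k σ).image (· + 1))
  | j + 1 => insert (σ (j + 1) + 1) ((sortedFam k σ j).erase (σ (j + 1)))

/-- `ear(π)`. -/
def ear (k : ℕ) (π : ℕ → ℕ) : ℕ :=
  ((Finset.Icc 1 (k - 2)).filter fun i => π (i + 1) = π i + 1 ∨ π i = π (i + 1) + 1).card
    + (({1, k - 1} : Finset ℕ) ∩ ({π 1, π (k - 1)} : Finset ℕ)).card

/-- `ε_i(π) = 1` if `i-1 ∈ S(π)` and `0` otherwise. -/
def eps (k : ℕ) (π : ℕ → ℕ) (i : ℕ) : ℕ := if i - 1 ∈ adjInvF k π then 1 else 0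

/-- Extension of a vector with the conventions `x_k = q-1` (`x₀ = 0` holds by
the normalization of vectors in `W^π_{k,q}`). -/
def xext (k q : ℕ) (x : ℕ → ℕ) (i : ℕ) : ℕ := if i = k then q - 1 else x i

/-- The label list `L^π(x) = {i ∈ [1,k] : x_{i-1} < x_i - ε_i(π)}`. -/
def labels (k q : ℕ) (π : ℕ → ℕ) (x : ℕ → ℕ) : Finset ℕ :=
  (Finset.Icc 1 k).filter fun i => xext k q x (i - 1) + eps k π i < xext k q x i

/-- A Sperner labeling of `G^π_{k,q}`. -/
def IsSperner (k q : ℕ) (π : ℕ → ℕ) (f : (ℕ → ℕ) → ℕ) : Prop :=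
  (∀ x ∈ W k q π, f x = 0 ∨ f x ∈ labels k q π x) ∧
  (∀ x ∈ W k q π, ∀ y ∈ W k q π, AdjRel k π x y → f x = f y ∨ f x = 0 ∨ f y = 0)

/-- The entry `w` appears between the entries `u` and `v` in `π`. -/
def Between (k : ℕ) (π : ℕ → ℕ) (u v w : ℕ) : Prop :=
  (posOf k π u < posOf k π w ∧ posOf k π w < posOf k π v) ∨
  (posOf k π v < posOf k π w ∧ posOf k π w < posOf k π u)

/-- A good set of colors for `π`. -/
def GoodSet (k : ℕ) (π : ℕ → ℕ) (C : Finset ℕ) : Prop :=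
  C ⊆ Finset.Icc 1 k ∧
  (∀ i ∈ C, ∀ j ∈ C, i ≠ j → ¬ GpiAdjU k π i j) ∧
  (∀ a ∈ C, ∀ b ∈ C, 1 < a → a < b → b < k →
      ((Between k π (a - 1) b a ∨ Between k π (a - 1) b (b - 1)) ∧
       (Between k π (b - 1) a (a - 1) ∨ Between k π (b - 1) a b))) ∧
  (1 ∈ C → ∀ b ∈ C, b ≠ 1 → Between k π 1 (b - 1) b) ∧
  (k ∈ C → ∀ b ∈ C, b ≠ k → Between k π b (k - 1) (b - 1))

/-- `x_a - x_{a-1} - ε_a(π)`, the `a`-th coordinate of the distance map `D`. -/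
def dval (k q : ℕ) (π : ℕ → ℕ) (x : ℕ → ℕ) (a : ℕ) : ℕ :=
  xext k q x a - xext k q x (a - 1) - eps k π a

/-- The distance coloring determined by a set of colors `C`:
`x` gets color `a ∈ C` if `dval x a` is the unique maximum of `dval x` on `C`,
and `0` otherwise. -/
def dcol (k q : ℕ) (π : ℕ → ℕ) (C : Finset ℕ) (x : ℕ → ℕ) : ℕ :=
  if h : ∃ a ∈ C, ∀ b ∈ C, b ≠ a → dval k q π x b < dval k q π x a then h.choose else 0

lemma adt_decomp (k n : ℕ) :
    Finset.Nat.antidiagonalTuple (k+1) n =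
      (Finset.range (n+1)).biUnion
        (fun m => (Finset.Nat.antidiagonalTuple k (n - m)).image (fun y : Fin k → ℕ => (Fin.cons m y : Fin (k+1) → ℕ))) := by
  ext x
  simp only [Finset.Nat.mem_antidiagonalTuple, Finset.mem_biUnion, Finset.mem_range,
    Finset.mem_image]
  constructor
  · intro h
    rw [Fin.sum_univ_succ] at h
    refine ⟨x 0, by omega, Fin.tail x, ?_, Fin.cons_self_tail x⟩
    have h2 : ∑ i : Fin k, Fin.tail x i = ∑ i : Fin k, x i.succ := rfl
    omega
  · rintro ⟨m, hm, y, hy, rfl⟩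
    rw [Fin.sum_univ_succ]
    simp only [Fin.cons_zero, Fin.cons_succ]
    omega

lemma adt_card (k : ℕ) : ∀ n : ℕ,
    (Finset.Nat.antidiagonalTuple (k+1) n).card = (n + k).choose n := by
  induction k with
  | zero => intro n; simp
  | succ k ih =>
    intro n
    rw [adt_decomp, Finset.card_biUnion]
    · have h1 : ∀ m ∈ Finset.range (n+1),
        ((Finset.Nat.antidiagonalTuple (k+1) (n - m)).image (fun y : Fin (k+1) → ℕ => (Fin.cons m y : Fin (k+2) → ℕ))).card
          = (n - m + k).choose (n - m) := by
        intro m _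
        rw [Finset.card_image_of_injective _ (Fin.cons_right_injective (α := fun _ : Fin (k+2) => ℕ) m), ih]
      rw [Finset.sum_congr rfl h1]
      rw [← Finset.sum_range_reflect (fun m => (n - m + k).choose (n - m)) (n+1)]
      have h2 : ∀ j ∈ Finset.range (n+1),
          (n - (n + 1 - 1 - j) + k).choose (n - (n + 1 - 1 - j)) = (j + k).choose k := by
        intro j hj
        rw [Finset.mem_range] at hj
        have hj' : n - (n + 1 - 1 - j) = j := by omega
        rw [hj']
        have := Nat.choose_symm (Nat.le_add_right j k)
        simpa using this.symm
      rw [Finset.sum_congr rfl h2]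
      have h3 : ∑ j ∈ Finset.range (n+1), (j + k).choose k
          = ∑ m ∈ Finset.Icc k (n + k), m.choose k := by
        rw [← Finset.Ico_add_one_right_eq_Icc, Finset.sum_Ico_eq_sum_range]
        have : n + k + 1 - k = n + 1 := by omega
        rw [this]
        exact Finset.sum_congr rfl (fun j _ => by rw [Nat.add_comm j k])
      rw [h3, Nat.sum_Icc_choose]
      have := Nat.choose_symm (show k + 1 ≤ n + k + 1 by omega)
      have h4 : n + k + 1 - (k + 1) = n := by omega
      rw [h4] at this
      rw [← this]
      rfl
    · intro m _ m' _ hmm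
      rw [Function.onFun, Finset.disjoint_left]
      rintro x hx hx'
      rw [Finset.mem_image] at hx hx'
      obtain ⟨y, _, rfl⟩ := hx
      obtain ⟨y', _, h⟩ := hx'
      apply hmm
      have := congrFun h 0
      simpa using this.symm


namespace EdgeCount

lemma adjInv_sub (k : ℕ) (π : ℕ → ℕ) : ∀ i ∈ adjInvF k π, 1 ≤ i ∧ i ≤ k - 2 := by
  intro i hi
  simp only [adjInvF, Finset.mem_filter] at hi
  exact Finset.mem_Icc.mp hi.1

def dd (T : Finset ℕ) (i : ℕ) : ℕ := if i - 1 ∈ T ∧ i ∉ T then 1 else 0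

def ee (k : ℕ) (π : ℕ → ℕ) (T : Finset ℕ) (i : ℕ) : ℕ := eps k π i + dd T i

def PP (k q : ℕ) (π : ℕ → ℕ) (T : Finset ℕ) (x : ℕ → ℕ) : Prop :=
  (∀ i, i ∉ Finset.Icc 1 (k-1) → x i = 0) ∧
  ∀ i ∈ Finset.Icc 1 k, xext k q x (i-1) + ee k π T i ≤ xext k q x i

def gN (k q : ℕ) (π : ℕ → ℕ) (T : Finset ℕ) (x : ℕ → ℕ) (j : ℕ) : ℕ :=
  xext k q x (j+1) - xext k q x j - ee k π T (j+1)

lemma char (k q : ℕ) (π : ℕ → ℕ) (T : Finset ℕ) (hk : 2 ≤ k) (_hq : 1 ≤ q)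
    (hT : T ⊆ Finset.Icc 1 (k-1)) (x : ℕ → ℕ) :
    (x ∈ W k q π ∧ (fun i => x i + if i ∈ T then 1 else 0) ∈ W k q π) ↔ PP k q π T x := by
  have hTmem : ∀ i ∈ T, 1 ≤ i ∧ i ≤ k - 1 := fun i hi => Finset.mem_Icc.mp (hT hi)
  have hSmem : ∀ i ∈ adjInvF k π, 1 ≤ i ∧ i ≤ k - 2 := adjInv_sub k π
  constructor
  · rintro ⟨⟨hx0, hx1, hx2, hx3⟩, ⟨hy0, hy1, hy2, hy3⟩⟩
    refine ⟨hx0, ?_⟩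
    intro i hi
    rw [Finset.mem_Icc] at hi
    rcases Nat.lt_or_ge i 2 with h2 | h2
    · have hi1 : i = 1 := by omega
      subst hi1
      have e0 : xext k q x 0 = 0 := by
        simp only [xext]; rw [if_neg (by omega)]; exact hx0 0 (by simp)
      have e1 : eps k π 1 = 0 := by
        simp only [eps]
        rw [if_neg]
        intro h; exact absurd (hSmem _ h).1 (by omega)
      have e2 : dd T 1 = 0 := by
        simp only [dd]
        rw [if_neg]
        rintro ⟨h, -⟩; exact absurd (hTmem _ h).1 (by omega)
      simp only [show (1:ℕ) - 1 = 0 from rfl, e0, ee, e1, e2]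
      omega
    rcases Nat.lt_or_ge i k with hik | hik
    · obtain ⟨j, rfl⟩ : ∃ j, i = j + 1 := ⟨i - 1, by omega⟩
      have hj1 : 1 ≤ j := by omega
      have hjk : j + 1 ≤ k - 1 := by omega
      have ex1 : xext k q x (j + 1 - 1) = x j := by
        simp only [xext, Nat.add_sub_cancel]; rw [if_neg (by omega)]
      have ex2 : xext k q x (j + 1) = x (j+1) := by
        simp only [xext]; rw [if_neg (by omega)]
      rw [ex1, ex2]
      simp only [ee, eps, dd, Nat.add_sub_cancel]
      by_cases hSj : j ∈ adjInvF k π <;> by_cases hDj : j ∈ T ∧ j + 1 ∉ T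
      · have h : x j + (if j ∈ T then 1 else 0) < x (j+1) + (if j+1 ∈ T then 1 else 0) :=
          hy3 j hSj
        rw [if_pos hDj.1, if_neg hDj.2] at h
        rw [if_pos hSj, if_pos hDj]
        omega
      · have h := hx3 j hSj
        rw [if_pos hSj, if_neg hDj]
        omega
      · have h : x j + (if j ∈ T then 1 else 0) ≤ x (j+1) + (if j+1 ∈ T then 1 else 0) :=
          hy2 j hj1 hjk
        rw [if_pos hDj.1, if_neg hDj.2] at h
        rw [if_neg hSj, if_pos hDj]
        omega
      · have h := hx2 j hj1 hjk
        rw [if_neg hSj, if_neg hDj]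
        omega
    · have hik' : i = k := by omega
      rw [hik']
      have ex2 : xext k q x k = q - 1 := by simp [xext]
      have ex1 : xext k q x (k-1) = x (k-1) := by
        simp only [xext]; rw [if_neg (by omega)]
      have e1 : eps k π k = 0 := by
        simp only [eps]; rw [if_neg]
        intro h; have := hSmem _ h; omega
      rw [ex2, ex1]
      simp only [ee, e1, dd]
      by_cases hD : k - 1 ∈ T ∧ k ∉ T
      · have h : x (k-1) + (if k-1 ∈ T then 1 else 0) ≤ q - 1 :=
          hy1 (k-1) (by rw [Finset.mem_Icc]; omega)
        rw [if_pos hD.1] at h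
        rw [if_pos hD]
        omega
      · have h : x (k-1) ≤ q - 1 := hx1 (k-1) (by rw [Finset.mem_Icc]; omega)
        rw [if_neg hD]
        omega
  · rintro ⟨h0, hP⟩
    have x0 : x 0 = 0 := h0 0 (by simp)
    have exk : xext k q x k = q - 1 := by simp [xext]
    have exi : ∀ i, i ≤ k - 1 → xext k q x i = x i := by
      intro i hi; simp only [xext]; rw [if_neg (by omega)]
    have mono : ∀ j, j ≤ k → ∀ i, i ≤ j → xext k q x i ≤ xext k q x j := by
      intro j
      induction j with
      | zero =>
        intro _ i hi
        have : i = 0 := by omega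
        subst this; exact le_refl _
      | succ j ihj =>
        intro hjk i hij
        rcases Nat.lt_or_ge i (j+1) with h | h
        · have h1 := ihj (by omega) i (by omega)
          have h2 := hP (j+1) (by rw [Finset.mem_Icc]; omega)
          rw [Nat.add_sub_cancel] at h2
          omega
        · have : i = j + 1 := by omega
          subst this; exact le_refl _
    have hstep : ∀ j, 1 ≤ j → j + 1 ≤ k - 1 →
        x j + (if j ∈ adjInvF k π then 1 else 0)
          + (if j ∈ T ∧ j + 1 ∉ T then 1 else 0) ≤ x (j+1) := by
      intro j hj1 hjk
      have h2 := hP (j+1) (by rw [Finset.mem_Icc]; omega)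
      rw [Nat.add_sub_cancel] at h2
      rw [exi j (by omega), exi (j+1) (by omega)] at h2
      simp only [ee, eps, dd, Nat.add_sub_cancel] at h2
      omega
    have key : ∀ m i, i ∈ T → k - i ≤ m → x i + 1 ≤ q - 1 := by
      intro m
      induction m with
      | zero =>
        intro i hiT hm
        exact absurd (hTmem i hiT).2 (by omega)
      | succ m ihm =>
        intro i hiT hm
        have hik : i ≤ k - 1 := (hTmem i hiT).2
        have hi1 : 1 ≤ i := (hTmem i hiT).1
        by_cases hiT' : i + 1 ∈ T
        · have h1 := ihm (i+1) hiT' (by omega)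
          have h2 := hP (i+1) (by rw [Finset.mem_Icc]; omega)
          rw [Nat.add_sub_cancel] at h2
          have hi1k : i + 1 ≤ k - 1 := (hTmem _ hiT').2
          rw [exi i (by omega), exi (i+1) (by omega)] at h2
          omega
        · have h2 := hP (i+1) (by rw [Finset.mem_Icc]; omega)
          rw [Nat.add_sub_cancel] at h2
          rw [exi i (by omega)] at h2
          have h3 := mono k (le_refl _) (i+1) (by omega)
          rw [exk] at h3
          simp only [ee, dd, Nat.add_sub_cancel] at h2
          rw [if_pos (show i ∈ T ∧ i + 1 ∉ T from ⟨hiT, hiT'⟩)] at h2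
          omega
    have hbound : ∀ i ∈ Finset.Icc 1 (k-1), x i ≤ q - 1 := by
      intro i hi
      rw [Finset.mem_Icc] at hi
      have := mono k (le_refl _) i (by omega)
      rw [exk, exi i hi.2] at this
      exact this
    refine ⟨⟨h0, hbound, ?_, ?_⟩, ?_, ?_, ?_, ?_⟩
    · intro i hi1 hik
      have h := hstep i hi1 hik
      omega
    · intro i hiS
      obtain ⟨hi1, hik2⟩ := hSmem i hiS
      have h := hstep i hi1 (by omega)
      rw [if_pos hiS] at h
      omega
    · intro i hi
      show x i + (if i ∈ T then 1 else 0) = 0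
      have hiT : i ∉ T := fun h => hi (hT h)
      rw [if_neg hiT, h0 i hi]
    · intro i hi
      show x i + (if i ∈ T then 1 else 0) ≤ q - 1
      by_cases hiT : i ∈ T
      · rw [if_pos hiT]
        exact key (k - i) i hiT (le_refl _)
      · rw [if_neg hiT]
        exact hbound i hi
    · intro i hi1 hik
      show x i + (if i ∈ T then 1 else 0) ≤ x (i+1) + (if i+1 ∈ T then 1 else 0)
      have h := hstep i hi1 hik
      by_cases h1 : i ∈ T <;> by_cases h2 : i + 1 ∈ T
      · rw [if_neg (show ¬(i ∈ T ∧ i + 1 ∉ T) from fun hc => hc.2 h2)] at h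
        rw [if_pos h1, if_pos h2]; omega
      · rw [if_pos (show i ∈ T ∧ i + 1 ∉ T from ⟨h1, h2⟩)] at h
        rw [if_pos h1, if_neg h2]; omega
      · rw [if_neg h1, if_pos h2]; omega
      · rw [if_neg h1, if_neg h2]; omega
    · intro i hiS
      obtain ⟨hi1, hik2⟩ := hSmem i hiS
      show x i + (if i ∈ T then 1 else 0) < x (i+1) + (if i+1 ∈ T then 1 else 0)
      have h := hstep i hi1 (by omega)
      rw [if_pos hiS] at h
      by_cases h1 : i ∈ T <;> by_cases h2 : i + 1 ∈ T
      · rw [if_neg (show ¬(i ∈ T ∧ i + 1 ∉ T) from fun hc => hc.2 h2)] at h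
        rw [if_pos h1, if_pos h2]; omega
      · rw [if_pos (show i ∈ T ∧ i + 1 ∉ T from ⟨h1, h2⟩)] at h
        rw [if_pos h1, if_neg h2]; omega
      · rw [if_neg h1, if_pos h2]; omega
      · rw [if_neg h1, if_neg h2]; omega

lemma tele (k q : ℕ) (π : ℕ → ℕ) (T : Finset ℕ) (hk : 2 ≤ k) (x : ℕ → ℕ)
    (hx : PP k q π T x) : ∀ i, i ≤ k →
    xext k q x i = ∑ j ∈ Finset.range i, (ee k π T (j+1) + gN k q π T x j) := by
  obtain ⟨h0, hP⟩ := hx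
  intro i
  induction i with
  | zero =>
    intro _
    simp only [Finset.range_zero, Finset.sum_empty]
    simp only [xext]
    rw [if_neg (by omega)]
    exact h0 0 (by simp)
  | succ i ih =>
    intro hik
    rw [Finset.sum_range_succ, ← ih (by omega)]
    have h2 := hP (i+1) (by rw [Finset.mem_Icc]; omega)
    rw [Nat.add_sub_cancel] at h2
    simp only [gN]
    omega

lemma sumee (k : ℕ) (π : ℕ → ℕ) (T : Finset ℕ) (_hk : 2 ≤ k)
    (hT : T ⊆ Finset.Icc 1 (k-1)) :
    ∑ j ∈ Finset.range k, ee k π T (j+1) = (adjInvF k π).card + numBlocks T := by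
  simp only [ee]
  rw [Finset.sum_add_distrib]
  congr 1
  · have h1 : ∀ j ∈ Finset.range k, eps k π (j+1) = if j ∈ adjInvF k π then 1 else 0 := by
      intro j _; simp only [eps, Nat.add_sub_cancel]
    rw [Finset.sum_congr rfl h1, Finset.sum_boole]
    have h2 : (Finset.range k).filter (fun j => j ∈ adjInvF k π) = adjInvF k π := by
      ext j
      simp only [Finset.mem_filter, Finset.mem_range]
      constructor
      · exact fun h => h.2
      · intro h
        have := adjInv_sub k π j h
        exact ⟨by omega, h⟩
    rw [h2]
    simp
  · have h1 : ∀ j ∈ Finset.range k, dd T (j+1) = if j ∈ T ∧ j + 1 ∉ T then 1 else 0 := by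
      intro j _; simp only [dd, Nat.add_sub_cancel]
    rw [Finset.sum_congr rfl h1, Finset.sum_boole]
    have h2 : (Finset.range k).filter (fun j => j ∈ T ∧ j + 1 ∉ T)
        = T.filter (fun t => t + 1 ∉ T) := by
      ext j
      simp only [Finset.mem_filter, Finset.mem_range]
      constructor
      · rintro ⟨-, h⟩; exact ⟨h.1, h.2⟩
      · intro h
        have := Finset.mem_Icc.mp (hT h.1)
        exact ⟨by omega, h.1, h.2⟩
    rw [h2]
    simp [numBlocks]

end EdgeCount

theorem stmt2 (k q : ℕ) (hk : 2 ≤ k) (hq : 1 ≤ q) (π : ℕ → ℕ) (hπ : OneLine k π)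
    (a b c : ℕ) (ha : 1 ≤ a) (hab : a < b) (hbk : b ≤ k)
    (hc : numBlocks ((Finset.Icc a (b - 1)).image π) = c) :
    {x | x ∈ W k q π ∧ shift π a b x ∈ W k q π}.ncard
      = Nat.choose (k + q - c - 2 - (adjInvF k π).card) (k - 1) := by
  set T := (Finset.Icc a (b - 1)).image π with hTdef
  have hT : T ⊆ Finset.Icc 1 (k-1) := by
    intro t ht
    rw [hTdef, Finset.mem_image] at ht
    obtain ⟨p, hp, rfl⟩ := ht
    rw [Finset.mem_Icc] at hp
    have hp' : p ∈ Set.Icc 1 (k-1) := by rw [Set.mem_Icc]; omega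
    have := hπ.1.mapsTo hp'
    rw [Set.mem_Icc] at this
    rw [Finset.mem_Icc]; exact this
  have hshift : ∀ x : ℕ → ℕ, shift π a b x = fun i => x i + if i ∈ T then 1 else 0 := by
    intro x; rfl
  have hsetEq : {x | x ∈ W k q π ∧ shift π a b x ∈ W k q π}
      = {x | EdgeCount.PP k q π T x} := by
    ext x
    rw [Set.mem_setOf_eq, Set.mem_setOf_eq, hshift x]
    exact EdgeCount.char k q π T hk hq hT x
  rw [hsetEq]
  set s := (adjInvF k π).card with hs
  by_cases hcase : s + c ≤ q - 1
  · set n := q - 1 - s - c with hn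
    have hinj : Set.InjOn (fun (x : ℕ → ℕ) (j : Fin k) => EdgeCount.gN k q π T x j.val)
        {x | EdgeCount.PP k q π T x} := by
      intro x hx x' hx' hxy
      have hkey : ∀ i, i ≤ k → xext k q x i = xext k q x' i := by
        intro i
        induction i with
        | zero =>
          intro _
          have e1 : xext k q x 0 = 0 := by
            simp only [xext]; rw [if_neg (by omega)]; exact hx.1 0 (by simp)
          have e2 : xext k q x' 0 = 0 := by
            simp only [xext]; rw [if_neg (by omega)]; exact hx'.1 0 (by simp)
          rw [e1, e2]
        | succ i ih =>
          intro hik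
          have h2 := hx.2 (i+1) (by rw [Finset.mem_Icc]; omega)
          have h2' := hx'.2 (i+1) (by rw [Finset.mem_Icc]; omega)
          rw [Nat.add_sub_cancel] at h2 h2'
          have hg : EdgeCount.gN k q π T x i = EdgeCount.gN k q π T x' i :=
            congrFun hxy (⟨i, by omega⟩ : Fin k)
          simp only [EdgeCount.gN] at hg
          have := ih (by omega)
          omega
      funext i
      by_cases hi : i ∈ Finset.Icc 1 (k-1)
      · rw [Finset.mem_Icc] at hi
        have e1 : xext k q x i = x i := by simp only [xext]; rw [if_neg (by omega)]
        have e2 : xext k q x' i = x' i := by simp only [xext]; rw [if_neg (by omega)]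
        rw [← e1, ← e2]
        exact hkey i (by omega)
      · rw [hx.1 i hi, hx'.1 i hi]
    have himg : (fun (x : ℕ → ℕ) (j : Fin k) => EdgeCount.gN k q π T x j.val)
        '' {x | EdgeCount.PP k q π T x} = ↑(Finset.Nat.antidiagonalTuple k n) := by
      ext g
      constructor
      · rintro ⟨x, hx, rfl⟩
        rw [Finset.mem_coe, Finset.Nat.mem_antidiagonalTuple]
        have ht := EdgeCount.tele k q π T hk x hx k (le_refl _)
        rw [show xext k q x k = q - 1 by simp [xext]] at ht
        rw [Finset.sum_add_distrib, EdgeCount.sumee k π T hk hT] at ht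
        have hsum : ∑ j : Fin k, EdgeCount.gN k q π T x j.val
            = ∑ j ∈ Finset.range k, EdgeCount.gN k q π T x j :=
          Fin.sum_univ_eq_sum_range (fun m => EdgeCount.gN k q π T x m) k
        simp only
        rw [hsum]
        omega
      · intro hg
        rw [Finset.mem_coe, Finset.Nat.mem_antidiagonalTuple] at hg
        classical
        set g' : ℕ → ℕ := fun j => if h : j < k then g ⟨j, h⟩ else 0 with hg'
        set F : ℕ → ℕ := fun i => ∑ j ∈ Finset.range i, (EdgeCount.ee k π T (j+1) + g' j)
          with hF
        have hFsucc : ∀ i, F (i+1) = F i + (EdgeCount.ee k π T (i+1) + g' i) := by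
          intro i
          rw [hF]
          exact Finset.sum_range_succ _ i
        have hgsum : ∑ j ∈ Finset.range k, g' j = n := by
          have h1 : ∑ j : Fin k, g' j.val = ∑ j ∈ Finset.range k, g' j :=
            Fin.sum_univ_eq_sum_range (fun m => g' m) k
          rw [← h1]
          have h2 : ∀ j : Fin k, g' j.val = g j := by
            intro j
            rw [hg']
            simp [j.isLt]
          rw [Finset.sum_congr rfl (fun j _ => h2 j)]
          exact hg
        have hFk : F k = q - 1 := by
          rw [hF]
          simp only
          rw [Finset.sum_add_distrib, EdgeCount.sumee k π T hk hT, hgsum]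
          omega
        set xx : ℕ → ℕ := fun i => if i ∈ Finset.Icc 1 (k-1) then F i else 0 with hxx
        have hxe : ∀ i, i ≤ k → xext k q xx i = F i := by
          intro i hik
          rcases Nat.eq_or_lt_of_le hik with h | h
          · rw [h, show xext k q xx k = q - 1 by simp [xext], hFk]
          · have e1 : xext k q xx i = xx i := by
              simp only [xext]; rw [if_neg (by omega)]
            rw [e1, hxx]
            by_cases h0 : i = 0
            · subst h0
              simp only
              rw [if_neg (by simp), hF]
              simp
            · simp only
              rw [if_pos (by rw [Finset.mem_Icc]; omega)]
        have hPP : EdgeCount.PP k q π T xx := by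
          constructor
          · intro i hi
            rw [hxx]
            simp only
            rw [if_neg hi]
          · intro i hi
            rw [Finset.mem_Icc] at hi
            obtain ⟨j, rfl⟩ : ∃ j, i = j + 1 := ⟨i - 1, by omega⟩
            rw [Nat.add_sub_cancel]
            rw [hxe j (by omega), hxe (j+1) (by omega), hFsucc j]
            omega
        refine ⟨xx, hPP, ?_⟩
        funext j
        have h1 : EdgeCount.gN k q π T xx j.val
            = xext k q xx (j.val+1) - xext k q xx j.val - EdgeCount.ee k π T (j.val+1) := rfl
        simp only
        rw [h1, hxe j.val (by omega), hxe (j.val+1) (by omega), hFsucc j.val]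
        have h2 : g' j.val = g j := by
          rw [hg']
          simp [j.isLt]
        rw [← h2]
        omega
    rw [← Set.ncard_image_of_injOn hinj, himg, Set.ncard_coe_finset]
    obtain ⟨k', rfl⟩ : ∃ k', k = k' + 1 := ⟨k - 1, by omega⟩
    rw [adt_card]
    have h1 : k' + 1 + q - c - 2 - s = n + k' := by omega
    rw [h1, show k' + 1 - 1 = k' from rfl]
    have h2 := Nat.choose_symm (Nat.le_add_right n k')
    simpa using h2.symm
  · have hempty : {x | EdgeCount.PP k q π T x} = (∅ : Set (ℕ → ℕ)) := by
      ext x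
      simp only [Set.mem_setOf_eq, Set.mem_empty_iff_false, iff_false]
      intro hx
      have ht := EdgeCount.tele k q π T hk x hx k (le_refl _)
      rw [show xext k q x k = q - 1 by simp [xext]] at ht
      rw [Finset.sum_add_distrib, EdgeCount.sumee k π T hk hT] at ht
      omega
    rw [hempty, Set.ncard_empty]
    symm
    apply Nat.choose_eq_zero_of_lt
    omega

end
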